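/- Let g be a finite-dimensional complex Lie algebra that possesses at least one maximal proper Lie subalgebra, and let φ(g) be the intersection of all maximal proper Lie subalgebras of g. Then φ(g) is a characteristic ideal of g; that is, φ(g) is an ideal of g and D(φ(g)) ⊆ φ(g) for every derivation D of g. -/

import Mathlib

open NormedSpace

set_option linter.unusedSectionVars false

section Aux

variable {E : Type*} [NormedAddCommGroup E] [NormedSpace ℂ E] [CompleteSpace E]

private lemma frattini_exp_apply_inv (D : E →L[ℂ] E) (t : ℂ) (x : E) :
    exp (t • D) (exp (-(t • D)) x) = x := by
  have h : exp (t • D) * exp (-(t • D)) = 1 := by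
    rw [← exp_add_of_commute_of_mem_ball (𝕂 := ℂ) ((Commute.refl (t • D)).neg_right)
      ((expSeries_radius_eq_top ℂ (E →L[ℂ] E)).symm ▸ edist_lt_top _ _)
      ((expSeries_radius_eq_top ℂ (E →L[ℂ] E)).symm ▸ edist_lt_top _ _), add_neg_cancel, exp_zero]
  calc exp (t • D) (exp (-(t • D)) x) = (exp (t • D) * exp (-(t • D))) x := rfl
    _ = x := by rw [h, ContinuousLinearMap.one_apply]

private lemma frattini_hasDerivAt_exp_apply (D : E →L[ℂ] E) (u : E) (s : ℂ) :
    HasDerivAt (fun t : ℂ => exp (t • D) u) (exp (s • D) (D u)) s := by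
  have h := (hasDerivAt_exp_smul_const D s).clm_apply (hasDerivAt_const s u)
  simpa [ContinuousLinearMap.mul_apply] using h

private lemma frattini_exp_comm (D : E →L[ℂ] E) (s : ℂ) (x : E) :
    D (exp (s • D) x) = exp (s • D) (D x) := by
  have h : D * exp (s • D) = exp (s • D) * D :=
    (((Commute.refl D).smul_right s).exp_right).eq
  calc D (exp (s • D) x) = (D * exp (s • D)) x := rfl
    _ = (exp (s • D) * D) x := by rw [h]
    _ = _ := rfl

private lemma frattini_exp_bracket (B : E →L[ℂ] E →L[ℂ] E) (D : E →L[ℂ] E)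
    (hD : ∀ a b, D (B a b) = B (D a) b + B a (D b)) (t : ℂ) (u v : E) :
    exp (t • D) (B u v) = B (exp (t • D) u) (exp (t • D) v) := by
  set F : ℂ → E := fun s => B (exp (s • D) u) (exp (s • D) v) with hF
  have hFd : ∀ s, HasDerivAt F (D (F s)) s := by
    intro s
    have h1 : HasDerivAt (fun s : ℂ => B (exp (s • D) u))
        (B (exp (s • D) (D u))) s := by
      have := (hasDerivAt_const s B).clm_apply (frattini_hasDerivAt_exp_apply D u s)
      simpa using this
    have h2 := h1.clm_apply (frattini_hasDerivAt_exp_apply D v s)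
    have heq : B (exp (s • D) (D u)) (exp (s • D) v)
        + B (exp (s • D) u) (exp (s • D) (D v)) = D (F s) := by
      rw [hF]
      simp only [hD, ← frattini_exp_comm]
    rw [heq] at h2
    exact h2
  have key : ∀ s, HasDerivAt (fun s : ℂ => exp (s • (-D)) (F s)) 0 s := by
    intro s
    have hN := hasDerivAt_exp_smul_const (-D) s
    have h := hN.clm_apply (hFd s)
    have heq : (exp (s • (-D)) * (-D)) (F s) + exp (s • (-D)) (D (F s)) = 0 := by
      simp [ContinuousLinearMap.mul_apply]
    rw [heq] at h
    exact h
  have hconst := is_const_of_deriv_eq_zero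
    (fun s => (key s).differentiableAt) (fun s => (key s).deriv) t 0
  have h0 : exp ((0:ℂ) • (-D)) (F 0) = B u v := by
    simp [hF, ContinuousLinearMap.one_apply]
  rw [h0] at hconst
  have := congrArg (fun z => exp (t • D) z) hconst
  rw [← this]
  have hneg : (t • (-D)) = -(t • D) := by rw [smul_neg]
  rw [hneg, frattini_exp_apply_inv]

private lemma frattini_mem_of_curve [FiniteDimensional ℂ E] {S : Submodule ℂ E} {c : ℂ → E} {v : E}
    (hc : ∀ t, c t ∈ S) (hd : HasDerivAt c v 0) : v ∈ S := by
  have hS : IsClosed (S : Set E) := S.closed_of_finiteDimensional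
  have h := hasDerivAt_iff_tendsto_slope.mp hd
  refine hS.mem_of_tendsto h (Filter.Eventually.of_forall fun t => ?_)
  show slope c 0 t ∈ S
  rw [slope_def_module]
  exact S.smul_mem _ (S.sub_mem (hc t) (hc 0))

end Aux

private lemma frattini_map_map {R L : Type*} [CommRing R] [LieRing L] [LieAlgebra R L]
    (f g : L →ₗ⁅R⁆ L) (hfg : ∀ x, f (g x) = x)
    (K : LieSubalgebra R L) : (K.map g).map f = K := by
  ext x
  simp only [LieSubalgebra.mem_map]
  constructor
  · rintro ⟨z, ⟨w, hw, rfl⟩, rfl⟩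
    rwa [hfg]
  · intro hx
    exact ⟨g x, ⟨x, hx, rfl⟩, hfg x⟩

private lemma frattini_isCoatom_map {R L : Type*} [CommRing R] [LieRing L] [LieAlgebra R L]
    (f g : L →ₗ⁅R⁆ L) (hfg : ∀ x, f (g x) = x) (hgf : ∀ x, g (f x) = x)
    {m : LieSubalgebra R L} (hm : IsCoatom m) : IsCoatom (m.map f) := by
  have htop : ∀ K : LieSubalgebra R L, K.map g = ⊤ → K = ⊤ := by
    intro K hK
    rw [eq_top_iff]
    intro x _
    have hx : g x ∈ K.map g := by rw [hK]; trivial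
    obtain ⟨w, hw, hwx⟩ := hx
    have : x = w := by rw [← hfg x, ← hwx]; exact hfg w
    rwa [this]
  constructor
  · intro h
    apply hm.1
    have hmm := frattini_map_map g f hgf m
    rw [h] at hmm
    rw [eq_top_iff]
    intro x _
    rw [← hmm]
    exact ⟨f x, trivial, hgf x⟩
  · intro K hK
    have h1 : m ≤ K.map g := by
      intro z hz
      exact ⟨f z, hK.le ⟨z, hz, rfl⟩, hgf z⟩
    have hne : m ≠ K.map g := by
      intro he
      have : m.map f = K := by rw [he, frattini_map_map f g hfg]
      exact hK.ne this
    exact htop K (hm.2 (K.map g) (lt_of_le_of_ne h1 hne))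


open NormedSpace



/-- The Frattini subalgebra of a finite-dimensional complex Lie algebra
(the intersection of all maximal proper Lie subalgebras, assuming at least one
maximal proper subalgebra exists) is a characteristic ideal: it is stable under
taking brackets with arbitrary elements and under all derivations. -/
theorem frattini_is_characteristic_ideal
    (g : Type*) [LieRing g] [LieAlgebra ℂ g] [FiniteDimensional ℂ g]
    (hmax : ∃ m : LieSubalgebra ℂ g, IsCoatom m)
    (φ : LieSubalgebra ℂ g)
    (hφ : φ = sInf {m : LieSubalgebra ℂ g | IsCoatom m}) :
    (∀ x : g, ∀ y ∈ φ, ⁅x, y⁆ ∈ φ) ∧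
      (∀ D : LieDerivation ℂ g g, ∀ y ∈ φ, D y ∈ φ) := by
  classical
  have memInf : ∀ x : g, (x ∈ sInf {m : LieSubalgebra ℂ g | IsCoatom m} ↔
      ∀ m : LieSubalgebra ℂ g, IsCoatom m → x ∈ m) := by
    intro x
    rw [← SetLike.mem_coe, LieSubalgebra.coe_sInf]
    simp
  set n := Module.finrank ℂ g with hn
  let e : g ≃ₗ[ℂ] (Fin n → ℂ) := (Module.finBasis ℂ g).equivFun
  let βl : (Fin n → ℂ) →ₗ[ℂ] (Fin n → ℂ) →ₗ[ℂ] (Fin n → ℂ) :=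
    LinearMap.mk₂ ℂ (fun a c => e ⁅e.symm a, e.symm c⁆)
      (by intro a b c; simp [add_lie])
      (by intro r a c; simp [smul_lie])
      (by intro a b c; simp [lie_add])
      (by intro r a c; simp [lie_smul])
  let B : (Fin n → ℂ) →L[ℂ] (Fin n → ℂ) →L[ℂ] (Fin n → ℂ) :=
    LinearMap.toContinuousLinearMap
      ((LinearMap.toContinuousLinearMap :
        ((Fin n → ℂ) →ₗ[ℂ] (Fin n → ℂ)) ≃ₗ[ℂ] _).toLinearMap ∘ₗ βl)
  have hB : ∀ a c, B a c = e ⁅e.symm a, e.symm c⁆ := by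
    intro a c
    simp [B, βl, LinearMap.coe_toContinuousLinearMap']
  have main : ∀ D : LieDerivation ℂ g g, ∀ y ∈ φ, D y ∈ φ := by
    intro D y hy
    let Dc : (Fin n → ℂ) →L[ℂ] (Fin n → ℂ) :=
      LinearMap.toContinuousLinearMap
        (e.toLinearMap ∘ₗ (D.toLinearMap ∘ₗ e.symm.toLinearMap))
    have hDc : ∀ x, Dc x = e (D (e.symm x)) := by
      intro x
      simp [Dc, LinearMap.coe_toContinuousLinearMap']
    have hLeib : ∀ a c, Dc (B a c) = B (Dc a) c + B a (Dc c) := by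
      intro a c
      rw [hB, hDc, hB, hB, hDc, hDc]
      simp only [e.symm_apply_apply]
      rw [LieDerivation.apply_lie_eq_add, map_add]
      abel
    set T : ℂ → ((Fin n → ℂ) →L[ℂ] (Fin n → ℂ)) := fun t => exp (t • Dc) with hTdef
    have hTinv : ∀ t x, T t (T (-t) x) = x := by
      intro t x
      have hns : (-t) • Dc = -(t • Dc) := neg_smul t Dc
      rw [hTdef]
      simp only []
      rw [hns]
      exact frattini_exp_apply_inv Dc t x
    have hTB : ∀ t x y, T t (B x y) = B (T t x) (T t y) :=
      fun t x y => frattini_exp_bracket B Dc hLeib t x y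
    let P : ℂ → (g →ₗ⁅ℂ⁆ g) := fun t =>
      { toLinearMap := e.symm.toLinearMap ∘ₗ ((T t).toLinearMap ∘ₗ e.toLinearMap)
        map_lie' := by
          intro x y
          show e.symm (T t (e ⁅x, y⁆)) = ⁅e.symm (T t (e x)), e.symm (T t (e y))⁆
          have h1 : e ⁅x, y⁆ = B (e x) (e y) := by rw [hB]; simp
          rw [h1, hTB, hB]
          simp }
    have hP : ∀ t x, P t x = e.symm (T t (e x)) := fun t x => rfl
    have hPinv : ∀ t x, P t (P (-t) x) = x := by
      intro t x
      rw [hP, hP, e.apply_symm_apply, hTinv, e.symm_apply_apply]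
    have hstab : ∀ t, ∀ z ∈ φ, (P t) z ∈ φ := by
      intro t z hz
      rw [hφ, memInf]
      intro m hm
      have hco : IsCoatom (m.map (P (-t))) := by
        refine frattini_isCoatom_map (P (-t)) (P t) ?_ ?_ hm
        · intro x
          have := hPinv (-t) x
          rwa [neg_neg] at this
        · intro x; exact hPinv t x
      have hzin : z ∈ m.map (P (-t)) := by
        rw [hφ, memInf] at hz
        exact hz _ hco
      obtain ⟨w, hw, hwz⟩ := hzin
      have : P t z = w := by
        rw [← hwz]
        have := hPinv t w
        exact this
      rwa [this]
    let S : Submodule ℂ (Fin n → ℂ) := (φ.toSubmodule).map e.toLinearMap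
    have hc : ∀ t : ℂ, T t (e y) ∈ S := by
      intro t
      exact ⟨(P t) y, hstab t y hy, by simp [hP]⟩
    have hd : HasDerivAt (fun t : ℂ => T t (e y)) (Dc (e y)) 0 := by
      have h := frattini_hasDerivAt_exp_apply Dc (e y) 0
      simpa [hTdef] using h
    have hv : Dc (e y) ∈ S := frattini_mem_of_curve hc hd
    obtain ⟨w, hw, hwe⟩ := hv
    have : D y = w := by
      apply e.injective
      have hwe' : e w = Dc (e y) := hwe
      rw [hwe', hDc, e.symm_apply_apply]
    rw [this]
    exact hw
  refine ⟨?_, main⟩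
  intro x y hy
  have h := main (LieDerivation.inner ℂ g g x) y hy
  have h2 : ⁅y, x⁆ ∈ φ := by simpa using h
  have h3 : ⁅x, y⁆ = -⁅y, x⁆ := (lie_skew x y).symm
  rw [h3]
  exact neg_mem h2
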